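/- Let {V(s) : s ≥ 0} be a locally a.s. bounded C-semigroup on a complete RN module X with generator (A,D(A)). For any z ∈ C(D(A)), the map g : [0,∞) → X defined by g(s) = C V(s) z is locally L⁰-Lipschitz: for every l > 0 there exists ξ_l ∈ L⁰₊(F) with ‖g(s₁) - g(s₂)‖ ≤ ξ_l |s₁ - s₂| for all s₁, s₂ ∈ [0,l]. -/

import Mathlib

open MeasureTheory Filter Set
noncomputable section

/-- A random normed module (RN module) over ℝ with base `(Ω, F, P)`:
an `L⁰(F,ℝ)`-module `X` together with an `L⁰`-norm. The `L⁰(F,ℝ)`-scalar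
multiplication is bundled as the field `smul`. -/
structure RNModuleStr {Ω : Type*} [MeasurableSpace Ω] (P : Measure Ω)
    (X : Type*) [AddCommGroup X] where
  smul : (Ω →ₘ[P] ℝ) → X → X
  nrm : X → Ω →ₘ[P] ℝ
  one_smul' : ∀ x, smul 1 x = x
  mul_smul' : ∀ ξ η x, smul (ξ * η) x = smul ξ (smul η x)
  smul_add' : ∀ ξ x y, smul ξ (x + y) = smul ξ x + smul ξ y
  add_smul' : ∀ ξ η x, smul (ξ + η) x = smul ξ x + smul η x
  nrm_nonneg : ∀ x, 0 ≤ nrm x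
  nrm_smul : ∀ ξ x, nrm (smul ξ x) = |ξ| * nrm x
  nrm_add_le : ∀ x y, nrm (x + y) ≤ nrm x + nrm y
  nrm_eq_zero : ∀ x, nrm x = 0 → x = 0

namespace RNModuleStr

variable {Ω : Type*} [MeasurableSpace Ω] {P : Measure Ω} {X : Type*} [AddCommGroup X]

/-- Scalar multiplication by a real constant (viewed as a constant random variable). -/
def rsmul (M : RNModuleStr P X) (c : ℝ) (x : X) : X :=
  M.smul (AEEqFun.const Ω c) x

/-- Convergence in the `(ε,λ)`-topology of an RN module, i.e. convergence in
probability of the `L⁰`-norms of the differences, along an arbitrary filter. -/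
def TendstoRN (M : RNModuleStr P X) {ι : Type*} (f : ι → X) (l : Filter ι) (x : X) : Prop :=
  ∀ ε : ℝ, 0 < ε → Tendsto (fun i => P {ω : Ω | ε ≤ M.nrm (f i - x) ω}) l (nhds 0)

/-- Sequential continuity of a map between RN modules; in the metrizable
`(ε,λ)`-topology this is equivalent to continuity. -/
def RNContinuousMap {Y : Type*} [AddCommGroup Y] (M : RNModuleStr P X)
    (N : RNModuleStr P Y) (T : X → Y) : Prop :=
  ∀ (u : ℕ → X) (x : X), M.TendstoRN u atTop x → N.TendstoRN (fun n => T (u n)) atTop (T x)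

/-- `T : X → Y` is a module homomorphism of `L⁰`-modules. -/
def IsModuleHom {Y : Type*} [AddCommGroup Y] (M : RNModuleStr P X)
    (N : RNModuleStr P Y) (T : X → Y) : Prop :=
  (∀ x y : X, T (x + y) = T x + T y) ∧ ∀ (ξ : Ω →ₘ[P] ℝ) (x : X), T (M.smul ξ x) = N.smul ξ (T x)

/-- `T` is almost surely bounded: `‖Tz‖ ≤ η ‖z‖` for some `η ∈ L⁰₊`. -/
def ASBounded {Y : Type*} [AddCommGroup Y] (M : RNModuleStr P X)
    (N : RNModuleStr P Y) (T : X → Y) : Prop :=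
  ∃ η : Ω →ₘ[P] ℝ, 0 ≤ η ∧ ∀ x : X, N.nrm (T x) ≤ η * M.nrm x

/-- Riemann sum over the uniform partition of `[a,b]` into `n` pieces. -/
def rsum (M : RNModuleStr P X) (f : ℝ → X) (a b : ℝ) (n : ℕ) : X :=
  ∑ i ∈ Finset.range n, M.rsmul ((b - a) / n) (f (a + (b - a) * i / n))

/-- `y` is the Riemann integral `∫ₐᵇ f(u) du` in the complete RN module `X`
(limit in the `(ε,λ)`-topology of the uniform Riemann sums). -/
def IsIntegral (M : RNModuleStr P X) (f : ℝ → X) (a b : ℝ) (y : X) : Prop :=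
  M.TendstoRN (fun n => M.rsum f a b n) atTop y

/-- The family `{V(s) : s ≥ 0}` is locally a.s. bounded:
`⋁_{s∈[0,l]} ‖V(s)‖ ∈ L⁰₊(F)` for every `l > 0`. -/
def LocASBounded (M : RNModuleStr P X) (V : ℝ → X → X) : Prop :=
  ∀ l : ℝ, 0 < l → ∃ η : Ω →ₘ[P] ℝ, 0 ≤ η ∧
    ∀ s ∈ Icc (0:ℝ) l, ∀ x : X, M.nrm (V s x) ≤ η * M.nrm x

/-- `{V(s) : s ≥ 0}` is a `C`-semigroup on the RN module `X`. -/
structure IsCSemigroup (M : RNModuleStr P X) (V : ℝ → X → X) (C : X → X) : Prop where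
  C_hom : M.IsModuleHom M C
  C_bdd : ASBounded M M C
  C_inj : Function.Injective C
  V_hom : ∀ s : ℝ, 0 ≤ s → M.IsModuleHom M (V s)
  V_bdd : ∀ s : ℝ, 0 ≤ s → ASBounded M M (V s)
  strong_cont : ∀ (z : X) (t : ℝ), 0 ≤ t →
    M.TendstoRN (fun s => V s z) (nhdsWithin t (Ici 0)) (V t z)
  V_zero : V 0 = C
  C_V : ∀ s t : ℝ, 0 ≤ s → 0 ≤ t → ∀ z : X, C (V (s + t) z) = V s (V t z)

/-- `(A, DA)` is the generator of the `C`-semigroup `{V(s) : s ≥ 0}`: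
`DA = {z : lim_{s↓0} (V(s)z - Cz)/s exists and lies in R(C)}` and
`Az = C⁻¹ lim_{s↓0} (V(s)z - Cz)/s`. -/
structure IsGenerator (M : RNModuleStr P X) (V : ℝ → X → X) (C : X → X)
    (DA : Set X) (A : X → X) : Prop where
  mem_iff : ∀ z : X, z ∈ DA ↔ ∃ w : X,
    M.TendstoRN (fun s => M.rsmul s⁻¹ (V s z - C z)) (nhdsWithin 0 (Ioi 0)) (C w)
  spec : ∀ z ∈ DA,
    M.TendstoRN (fun s => M.rsmul s⁻¹ (V s z - C z)) (nhdsWithin 0 (Ioi 0)) (C (A z))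

/-- `{V(s) : s ≥ 0}` is a mild `C`-existence family for the module homomorphism
`A` with domain `DA`. -/
structure IsMildCExistenceFamily (M : RNModuleStr P X) (V : ℝ → X → X) (C : X → X)
    (DA : Set X) (A : X → X) : Prop where
  V_hom : ∀ s : ℝ, 0 ≤ s → M.IsModuleHom M (V s)
  locBdd : M.LocASBounded V
  strong_cont : ∀ (z : X) (t : ℝ), 0 ≤ t →
    M.TendstoRN (fun s => V s z) (nhdsWithin t (Ici 0)) (V t z)
  integral_mem : ∀ (z : X) (s : ℝ), 0 ≤ s → ∃ y : X,
    M.IsIntegral (fun u => V u z) 0 s y ∧ y ∈ DA ∧ A y = V s z - C z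

/-- `A` (with domain `DA`) is a closed module homomorphism: its graph is closed
in the `(ε,λ)`-topology. -/
def IsClosedOperator (M : RNModuleStr P X) (DA : Set X) (A : X → X) : Prop :=
  ∀ (u : ℕ → X) (z y : X), (∀ n, u n ∈ DA) →
    M.TendstoRN u atTop z → M.TendstoRN (fun n => A (u n)) atTop y →
    z ∈ DA ∧ A z = y

end RNModuleStr

open RNModuleStr

section Helpers

variable {Ω : Type*} [MeasurableSpace Ω] {P : Measure Ω} {X : Type*} [AddCommGroup X]

lemma ae_of_le {f g : Ω →ₘ[P] ℝ} (h : f ≤ g) : ∀ᵐ ω ∂P, f ω ≤ g ω :=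
  AEEqFun.coeFn_le.2 h

lemma ae_nonneg {f : Ω →ₘ[P] ℝ} (h : 0 ≤ f) : ∀ᵐ ω ∂P, 0 ≤ f ω := by
  filter_upwards [ae_of_le h, AEEqFun.coeFn_zero (β := ℝ) (μ := P)] with ω h1 h2
  rw [h2] at h1; exact h1

lemma le_of_ae {f g : Ω →ₘ[P] ℝ} (h : ∀ᵐ ω ∂P, f ω ≤ g ω) : f ≤ g :=
  AEEqFun.coeFn_le.1 h

lemma const_mul_const (a b : ℝ) :
    (AEEqFun.const Ω (a * b) : Ω →ₘ[P] ℝ) = AEEqFun.const Ω a * AEEqFun.const Ω b := by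
  apply AEEqFun.ext
  filter_upwards [AEEqFun.coeFn_mul (AEEqFun.const Ω a : Ω →ₘ[P] ℝ) (AEEqFun.const Ω b),
    AEEqFun.coeFn_const (μ := P) Ω (a * b), AEEqFun.coeFn_const (μ := P) Ω a,
    AEEqFun.coeFn_const (μ := P) Ω b] with ω h1 h2 h3 h4
  rw [h1, h2, Pi.mul_apply, h3, h4]; rfl

lemma const_one_eq : (AEEqFun.const Ω (1 : ℝ) : Ω →ₘ[P] ℝ) = 1 := by
  apply AEEqFun.ext
  filter_upwards [AEEqFun.coeFn_const (μ := P) Ω (1 : ℝ),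
    AEEqFun.coeFn_one (β := ℝ) (μ := P)] with ω h1 h2
  rw [h1, h2]; rfl

namespace RNModuleStr

variable (M : RNModuleStr P X)

lemma smul_zero'' (x : X) : M.smul 0 x = 0 := by
  have h := M.add_smul' 0 0 x
  rw [add_zero] at h
  have h2 : M.smul 0 x + 0 = M.smul 0 x + M.smul 0 x := by rw [add_zero]; exact h
  exact (add_left_cancel h2).symm

lemma nrm_zero : M.nrm (0 : X) = 0 := by
  have h := M.nrm_smul 0 (0 : X)
  rw [M.smul_zero''] at h
  rw [h]
  apply AEEqFun.ext
  filter_upwards [AEEqFun.coeFn_mul (|(0 : Ω →ₘ[P] ℝ)|) (M.nrm 0),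
    AEEqFun.coeFn_abs (0 : Ω →ₘ[P] ℝ), AEEqFun.coeFn_zero (β := ℝ) (μ := P)] with ω h1 h2 h3
  rw [h1, Pi.mul_apply, h2, h3]
  simp

lemma rsmul_rsmul (a b : ℝ) (x : X) : M.rsmul a (M.rsmul b x) = M.rsmul (a * b) x := by
  rw [rsmul, rsmul, rsmul, const_mul_const, M.mul_smul']

lemma rsmul_one (x : X) : M.rsmul 1 x = x := by
  rw [rsmul, const_one_eq, M.one_smul']

lemma rsmul_neg_one (x : X) : M.rsmul (-1) x = -x := by
  have hc : (0 : Ω →ₘ[P] ℝ) = AEEqFun.const Ω (1 : ℝ) + AEEqFun.const Ω (-1 : ℝ) := by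
    apply AEEqFun.ext
    filter_upwards [AEEqFun.coeFn_add (AEEqFun.const Ω (1:ℝ) : Ω →ₘ[P] ℝ)
      (AEEqFun.const Ω (-1:ℝ)), AEEqFun.coeFn_const (μ := P) Ω (1:ℝ),
      AEEqFun.coeFn_const (μ := P) Ω (-1:ℝ), AEEqFun.coeFn_zero (β := ℝ) (μ := P)]
      with ω h1 h2 h3 h4
    rw [h4, h1, Pi.add_apply, h2, h3]; norm_num
  have h0 : M.smul 0 x = 0 := M.smul_zero'' x
  rw [hc, M.add_smul', const_one_eq, M.one_smul'] at h0
  exact eq_neg_of_add_eq_zero_right h0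

lemma nrm_neg (x : X) : M.nrm (-x) = M.nrm x := by
  rw [← M.rsmul_neg_one, rsmul, M.nrm_smul]
  apply AEEqFun.ext
  filter_upwards [AEEqFun.coeFn_mul (|(AEEqFun.const Ω (-1:ℝ) : Ω →ₘ[P] ℝ)|) (M.nrm x),
    AEEqFun.coeFn_abs (AEEqFun.const Ω (-1:ℝ) : Ω →ₘ[P] ℝ),
    AEEqFun.coeFn_const (μ := P) Ω (-1:ℝ)] with ω h1 h2 h3
  rw [h1, Pi.mul_apply, h2, h3]
  norm_num

lemma coeFn_nrm_rsmul (c : ℝ) (x : X) :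
    ⇑(M.nrm (M.rsmul c x)) =ᵐ[P] fun ω => |c| * (M.nrm x) ω := by
  rw [rsmul, M.nrm_smul]
  filter_upwards [AEEqFun.coeFn_mul (|(AEEqFun.const Ω c : Ω →ₘ[P] ℝ)|) (M.nrm x),
    AEEqFun.coeFn_abs (AEEqFun.const Ω c : Ω →ₘ[P] ℝ),
    AEEqFun.coeFn_const (μ := P) Ω c] with ω h1 h2 h3
  rw [h1, Pi.mul_apply, h2, h3]; rfl

lemma hom_map_zero {T : X → X} (hT : M.IsModuleHom M T) : T 0 = 0 := by
  have h := hT.1 0 0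
  rw [add_zero] at h
  have h2 : T 0 + 0 = T 0 + T 0 := by rw [add_zero]; exact h
  exact (add_left_cancel h2).symm

lemma hom_map_sub {T : X → X} (hT : M.IsModuleHom M T) (x y : X) :
    T (x - y) = T x - T y := by
  have hneg : T (-y) = -T y := by
    have h := hT.1 y (-y)
    rw [add_neg_cancel, M.hom_map_zero hT] at h
    exact (eq_neg_of_add_eq_zero_right h.symm)
  rw [sub_eq_add_neg, hT.1 x (-y), hneg, sub_eq_add_neg]

lemma coeFn_nsmul' (b : Ω →ₘ[P] ℝ) (n : ℕ) :
    ⇑(n • b) =ᵐ[P] fun ω => (n : ℝ) * b ω := by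
  induction n with
  | zero =>
    rw [zero_nsmul]
    filter_upwards [AEEqFun.coeFn_zero (β := ℝ) (μ := P)] with ω hω
    rw [hω]; simp
  | succ n ih =>
    rw [succ_nsmul]
    filter_upwards [AEEqFun.coeFn_add (n • b) b, ih] with ω h1 h2
    rw [h1, Pi.add_apply, h2]; push_cast; ring

lemma nrm_sum_le (f : ℕ → X) (b : Ω →ₘ[P] ℝ) :
    ∀ n : ℕ, (∀ i < n, M.nrm (f i) ≤ b) →
      M.nrm (∑ i ∈ Finset.range n, f i) ≤ n • b := by
  intro n
  induction n with
  | zero =>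
    intro _
    rw [Finset.range_zero, Finset.sum_empty, M.nrm_zero, zero_nsmul]
  | succ n ih =>
    intro hb
    rw [Finset.sum_range_succ, succ_nsmul]
    refine le_of_ae ?_
    filter_upwards [ae_of_le (M.nrm_add_le (∑ i ∈ Finset.range n, f i) (f n)),
      ae_of_le (ih fun i hi => hb i (Nat.lt_succ_of_lt hi)),
      ae_of_le (hb n (Nat.lt_succ_self n)),
      AEEqFun.coeFn_add (M.nrm (∑ i ∈ Finset.range n, f i)) (M.nrm (f n)),
      AEEqFun.coeFn_add (n • b) b] with ω ha hihω hcω hd he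
    rw [hd, Pi.add_apply] at ha
    rw [he, Pi.add_apply]
    linarith

end RNModuleStr

/-- Key estimate: for `y ∈ D(A)` and `0 < h ≤ l`,
`‖C V(h) y - C C y‖ ≤ h · η · ‖C A y‖` a.e., where `η` bounds `V` on `[0,l]`. -/
lemma key_lipschitz (M : RNModuleStr P X)
    {V : ℝ → X → X} {C : X → X} {DA : Set X} {A : X → X}
    (hV : IsCSemigroup M V C) (hA : IsGenerator M V C DA A)
    {y : X} (hy : y ∈ DA) {l : ℝ} {η : Ω →ₘ[P] ℝ} (hη0 : 0 ≤ η)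
    (hη : ∀ s ∈ Icc (0:ℝ) l, ∀ x : X, M.nrm (V s x) ≤ η * M.nrm x)
    {h : ℝ} (hh0 : 0 < h) (hhl : h ≤ l) :
    ∀ᵐ ω ∂P, (M.nrm (C (V h y) - C (C y))) ω ≤ h * (η ω * (M.nrm (C (A y))) ω) := by
  set δ : ℕ → ℝ := fun n => h / (n + 1) with hδdef
  have hδpos : ∀ n : ℕ, 0 < δ n := fun n => div_pos hh0 (by positivity)
  have hδh : ∀ n : ℕ, ((n : ℝ) + 1) * δ n = h := by
    intro n
    have hne : ((n : ℝ) + 1) ≠ 0 := by positivity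
    simp only [hδdef]; field_simp
  set E : ℕ → X := fun n => M.rsmul (δ n)⁻¹ (V (δ n) y - C y) with hEdef
  have hVE : ∀ n, V (δ n) y - C y = M.rsmul (δ n) (E n) := by
    intro n
    rw [hEdef]
    simp only []
    rw [M.rsmul_rsmul, mul_inv_cancel₀ (hδpos n).ne', M.rsmul_one]
  -- telescoping identity
  have tele : ∀ n : ℕ, C (V h y) - C (C y) =
      ∑ i ∈ Finset.range (n + 1), V ((i : ℝ) * δ n) (V (δ n) y - C y) := by
    intro n
    have hterm : ∀ i : ℕ, V ((i : ℝ) * δ n) (V (δ n) y - C y)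
        = (fun i : ℕ => C (V ((i : ℝ) * δ n) y)) (i + 1)
          - (fun i : ℕ => C (V ((i : ℝ) * δ n) y)) i := by
      intro i
      have hi0 : (0 : ℝ) ≤ (i : ℝ) * δ n := mul_nonneg (Nat.cast_nonneg i) (hδpos n).le
      have h1 : C (V ((i : ℝ) * δ n + δ n) y) = V ((i : ℝ) * δ n) (V (δ n) y) :=
        hV.C_V _ _ hi0 (hδpos n).le y
      have h2 : C (V ((i : ℝ) * δ n) y) = V ((i : ℝ) * δ n) (C y) := by
        have h3 := hV.C_V ((i : ℝ) * δ n) 0 hi0 le_rfl y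
        rw [add_zero, hV.V_zero] at h3
        exact h3
      simp only []
      rw [M.hom_map_sub (hV.V_hom _ hi0), ← h1, ← h2]
      congr 3
      push_cast; ring
    have hsum := Finset.sum_range_sub (fun i : ℕ => C (V ((i : ℝ) * δ n) y)) (n + 1)
    calc C (V h y) - C (C y)
        = (fun i : ℕ => C (V ((i : ℝ) * δ n) y)) (n + 1)
          - (fun i : ℕ => C (V ((i : ℝ) * δ n) y)) 0 := by
          simp only []
          rw [Nat.cast_zero, zero_mul, hV.V_zero]
          congr 3
          push_cast
          rw [hδh n]
      _ = ∑ i ∈ Finset.range (n + 1), ((fun i : ℕ => C (V ((i : ℝ) * δ n) y)) (i + 1)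
          - (fun i : ℕ => C (V ((i : ℝ) * δ n) y)) i) := hsum.symm
      _ = ∑ i ∈ Finset.range (n + 1), V ((i : ℝ) * δ n) (V (δ n) y - C y) :=
          Finset.sum_congr rfl fun i _ => (hterm i).symm
  -- per-n L⁰ bound
  have bnd : ∀ n : ℕ, M.nrm (C (V h y) - C (C y))
      ≤ (n + 1) • (η * M.nrm (V (δ n) y - C y)) := by
    intro n
    rw [tele n]
    apply M.nrm_sum_le
    intro i hi
    have hi0 : (0 : ℝ) ≤ (i : ℝ) * δ n := mul_nonneg (Nat.cast_nonneg i) (hδpos n).le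
    have hil : (i : ℝ) * δ n ≤ l := by
      have hile : (i : ℝ) ≤ (n : ℝ) + 1 := by
        have := Nat.lt_succ_iff.mp hi
        have : (i : ℝ) ≤ (n : ℝ) := by exact_mod_cast this
        linarith
      calc (i : ℝ) * δ n ≤ ((n : ℝ) + 1) * δ n :=
            mul_le_mul_of_nonneg_right hile (hδpos n).le
        _ = h := hδh n
        _ ≤ l := hhl
    exact hη ((i : ℝ) * δ n) ⟨hi0, hil⟩ _
  -- per-n a.e. pointwise bound
  have ae_bnd : ∀ n : ℕ, ∀ᵐ ω ∂P,
      (M.nrm (C (V h y) - C (C y))) ω ≤ h * (η ω * (M.nrm (E n)) ω) := by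
    intro n
    have hr : ⇑(M.nrm (V (δ n) y - C y)) =ᵐ[P] fun ω => |δ n| * (M.nrm (E n)) ω := by
      rw [hVE n]; exact M.coeFn_nrm_rsmul (δ n) (E n)
    filter_upwards [ae_of_le (bnd n),
      RNModuleStr.coeFn_nsmul' (η * M.nrm (V (δ n) y - C y)) (n + 1),
      AEEqFun.coeFn_mul η (M.nrm (V (δ n) y - C y)), hr] with ω h1 h2 h3 h4
    rw [h2] at h1
    rw [h3, Pi.mul_apply, h4] at h1
    have heq : ((n + 1 : ℕ) : ℝ) * (η ω * (|δ n| * (M.nrm (E n)) ω))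
        = h * (η ω * (M.nrm (E n)) ω) := by
      rw [abs_of_pos (hδpos n)]
      push_cast
      rw [← hδh n]; ring
    rw [heq] at h1
    exact h1
  -- triangle inequality a.e.
  have ae_tri : ∀ n : ℕ, ∀ᵐ ω ∂P,
      (M.nrm (E n)) ω ≤ (M.nrm (C (A y))) ω + (M.nrm (E n - C (A y))) ω := by
    intro n
    have hEeq : C (A y) + (E n - C (A y)) = E n := by abel
    have htr := M.nrm_add_le (C (A y)) (E n - C (A y))
    rw [hEeq] at htr
    filter_upwards [ae_of_le htr,
      AEEqFun.coeFn_add (M.nrm (C (A y))) (M.nrm (E n - C (A y)))] with ω h1 h2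
    rw [h2, Pi.add_apply] at h1
    exact h1
  -- convergence of E n to C (A y)
  have hδtend : Tendsto δ atTop (nhdsWithin 0 (Ioi 0)) := by
    rw [tendsto_nhdsWithin_iff]
    constructor
    · exact Tendsto.div_atTop tendsto_const_nhds
        (tendsto_atTop_add_const_right atTop 1 tendsto_natCast_atTop_atTop)
    · exact Eventually.of_forall fun n => hδpos n
  have hTend : ∀ ε : ℝ, 0 < ε →
      Tendsto (fun n => P {ω | ε ≤ (M.nrm (E n - C (A y))) ω}) atTop (nhds 0) :=
    fun ε hε => (hA.spec y hy ε hε).comp hδtend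
  have hTIM : TendstoInMeasure P (fun n => ⇑(M.nrm (E n - C (A y)))) atTop
      (fun _ => (0 : ℝ)) := by
    rw [tendstoInMeasure_iff_dist]
    intro ε hε
    have hmeq : ∀ n : ℕ, P {x | ε ≤ dist ((M.nrm (E n - C (A y))) x) ((fun _ => (0:ℝ)) x)}
        = P {ω | ε ≤ (M.nrm (E n - C (A y))) ω} := by
      intro n
      apply measure_congr
      filter_upwards [ae_nonneg (M.nrm_nonneg (E n - C (A y)))] with ω hω
      show (ε ≤ dist ((M.nrm (E n - C (A y))) ω) 0) = (ε ≤ (M.nrm (E n - C (A y))) ω)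
      rw [Real.dist_eq, sub_zero, abs_of_nonneg hω]
    have hfun : (fun n : ℕ => P {x | ε ≤ dist ((M.nrm (E n - C (A y))) x)
        ((fun _ => (0:ℝ)) x)}) = fun n => P {ω | ε ≤ (M.nrm (E n - C (A y))) ω} :=
      funext hmeq
    rw [hfun]
    exact hTend ε hε
  obtain ⟨ns, _, hae⟩ := hTIM.exists_seq_tendsto_ae
  filter_upwards [hae, ae_all_iff.2 ae_bnd, ae_all_iff.2 ae_tri, ae_nonneg hη0]
    with ω hconv hbndω htriω hηω
  have hk : ∀ k : ℕ, (M.nrm (C (V h y) - C (C y))) ω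
      ≤ h * (η ω * ((M.nrm (C (A y))) ω + (M.nrm (E (ns k) - C (A y))) ω)) := by
    intro k
    refine le_trans (hbndω (ns k)) ?_
    have h1 : η ω * (M.nrm (E (ns k))) ω
        ≤ η ω * ((M.nrm (C (A y))) ω + (M.nrm (E (ns k) - C (A y))) ω) :=
      mul_le_mul_of_nonneg_left (htriω (ns k)) hηω
    exact mul_le_mul_of_nonneg_left h1 hh0.le
  have hlim : Tendsto (fun k => h * (η ω * ((M.nrm (C (A y))) ω
      + (M.nrm (E (ns k) - C (A y))) ω))) atTop
      (nhds (h * (η ω * ((M.nrm (C (A y))) ω + 0)))) :=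
    ((tendsto_const_nhds.add hconv).const_mul (η ω)).const_mul h
  have hfin := ge_of_tendsto' hlim hk
  rw [add_zero] at hfin
  exact hfin

end Helpers

/-- for a locally a.s. bounded `C`-semigroup with generator
`(A,D(A))` and `z = Cy ∈ C(D(A))`, the map `g(s) = CV(s)z` is locally
`L⁰`-Lipschitz. -/
theorem stmt6 {Ω : Type*} [MeasurableSpace Ω] (P : Measure Ω) [IsProbabilityMeasure P]
    {X : Type*} [AddCommGroup X] (M : RNModuleStr P X)
    (V : ℝ → X → X) (C : X → X) (DA : Set X) (A : X → X)
    (hV : IsCSemigroup M V C) (hloc : M.LocASBounded V)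
    (hA : IsGenerator M V C DA A) (y : X) (hy : y ∈ DA) :
    ∀ l : ℝ, 0 < l → ∃ ξ : Ω →ₘ[P] ℝ, 0 ≤ ξ ∧
      ∀ s₁ ∈ Icc (0:ℝ) l, ∀ s₂ ∈ Icc (0:ℝ) l,
        M.nrm (C (V s₁ (C y)) - C (V s₂ (C y))) ≤ |s₁ - s₂| • ξ := by
  intro l hl
  obtain ⟨η, hη0, hη⟩ := hloc l hl
  set ξ : Ω →ₘ[P] ℝ := η * (η * M.nrm (C (A y))) with hξdef
  have hξae : ∀ᵐ ω ∂P, ξ ω = η ω * (η ω * (M.nrm (C (A y))) ω) := by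
    filter_upwards [AEEqFun.coeFn_mul η (η * M.nrm (C (A y))),
      AEEqFun.coeFn_mul η (M.nrm (C (A y)))] with ω h1 h2
    rw [hξdef, h1, Pi.mul_apply, h2, Pi.mul_apply]
  have hξ0 : 0 ≤ ξ := by
    apply le_of_ae
    filter_upwards [hξae, ae_nonneg hη0, ae_nonneg (M.nrm_nonneg (C (A y))),
      AEEqFun.coeFn_zero (β := ℝ) (μ := P)] with ω h1 h2 h3 h4
    rw [h4, h1]
    show (0:ℝ) ≤ _
    positivity
  refine ⟨ξ, hξ0, ?_⟩
  have key : ∀ a b : ℝ, a ∈ Icc (0:ℝ) l → b ∈ Icc (0:ℝ) l → b ≤ a →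
      M.nrm (C (V a (C y)) - C (V b (C y))) ≤ |a - b| • ξ := by
    intro a b ha hb hba
    rcases eq_or_lt_of_le hba with heq | hlt
    · rw [heq, sub_self, sub_self, abs_zero, zero_smul, M.nrm_zero]
    · have hgap0 : 0 < a - b := sub_pos.2 hlt
      have hgapl : a - b ≤ l := by
        have h1 := ha.2; have h2 := hb.1; linarith
      have hid : C (V a (C y)) - C (V b (C y)) = V b (C (V (a - b) y) - C (C y)) := by
        have h1 : C (V a (C y)) = V b (V (a - b) (C y)) := by
          have h0 := hV.C_V b (a - b) hb.1 hgap0.le (C y)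
          rw [show b + (a - b) = a by ring] at h0
          exact h0
        have h2 : V (a - b) (C y) = C (V (a - b) y) := by
          have h0 := hV.C_V (a - b) 0 hgap0.le le_rfl y
          rw [add_zero, hV.V_zero] at h0
          exact h0.symm
        have h3 : C (V b (C y)) = V b (C (C y)) := by
          have h0 := hV.C_V b 0 hb.1 le_rfl (C y)
          rw [add_zero, hV.V_zero] at h0
          exact h0
        rw [h1, h2, h3, ← M.hom_map_sub (hV.V_hom b hb.1)]
      rw [hid]
      have h4 := hη b hb (C (V (a - b) y) - C (C y))
      have h5 := key_lipschitz M hV hA hy hη0 hη hgap0 hgapl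
      apply le_of_ae
      filter_upwards [ae_of_le h4, h5, hξae, ae_nonneg hη0,
        AEEqFun.coeFn_mul η (M.nrm (C (V (a - b) y) - C (C y))),
        AEEqFun.coeFn_smul |a - b| ξ] with ω k1 k2 k3 k4 k5 k6
      rw [k5, Pi.mul_apply] at k1
      rw [k6, Pi.smul_apply, smul_eq_mul, k3]
      have k7 : η ω * (M.nrm (C (V (a - b) y) - C (C y))) ω
          ≤ η ω * ((a - b) * (η ω * (M.nrm (C (A y))) ω)) :=
        mul_le_mul_of_nonneg_left k2 k4
      calc (M.nrm (V b (C (V (a - b) y) - C (C y)))) ω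
          ≤ η ω * (M.nrm (C (V (a - b) y) - C (C y))) ω := k1
        _ ≤ η ω * ((a - b) * (η ω * (M.nrm (C (A y))) ω)) := k7
        _ = |a - b| * (η ω * (η ω * (M.nrm (C (A y))) ω)) := by
            rw [abs_of_pos hgap0]; ring
  intro s₁ hs₁ s₂ hs₂
  rcases le_total s₂ s₁ with hc | hc
  · exact key s₁ s₂ hs₁ hs₂ hc
  · have h1 := key s₂ s₁ hs₂ hs₁ hc
    have h2 : M.nrm (C (V s₁ (C y)) - C (V s₂ (C y)))
        = M.nrm (C (V s₂ (C y)) - C (V s₁ (C y))) := by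
      rw [← M.nrm_neg, neg_sub]
    rw [h2, abs_sub_comm]
    exact h1
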